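/- For all ξ₁, η₁, ξ₂, η₂ ∈ C_c²((0,∞)), the following orthogonality relation holds: ∫₀^∞ ∫_ℝ (ξ₁ *₊ η₁)(b,a) · conj((ξ₂ *₊ η₂)(b,a)) db a⁻² da = (∫₀^∞ η₂(t) conj(η₁(t)) t⁻¹ dt) · (∫₀^∞ ξ₁(t) conj(ξ₂(t)) t⁻² dt). In particular both sides are well defined (the integrand on the left is integrable). -/

import Mathlib

open MeasureTheory Set

/-- Coefficient function of the representation `π₊` of the real `ax+b` group:
`(ξ *₊ η)(b,a) = ∫₀^∞ e^{-2πibt} ξ(at) conj(η(t)) t⁻¹ dt`. -/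
noncomputable def coeffP (ξ η : ℝ → ℂ) (b a : ℝ) : ℂ :=
  ∫ t in Ioi (0 : ℝ),
    Complex.exp (-(2 * Real.pi * b * t : ℝ) * Complex.I) * ξ (a * t)
      * starRingEnd ℂ (η t) * (t : ℂ)⁻¹

/-- Coefficient function of the representation `π₋` of the real `ax+b` group:
`(ξ *₋ η)(b,a) = ∫₀^∞ e^{2πibt} ξ(at) conj(η(t)) t⁻¹ dt`. -/
noncomputable def coeffM (ξ η : ℝ → ℂ) (b a : ℝ) : ℂ :=
  ∫ t in Ioi (0 : ℝ),
    Complex.exp ((2 * Real.pi * b * t : ℝ) * Complex.I) * ξ (a * t)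
      * starRingEnd ℂ (η t) * (t : ℂ)⁻¹

/-- `C_c²((0,∞))`: twice continuously differentiable complex-valued functions on `ℝ`
with compact support contained in `(0,∞)`. -/
def CcTwo (f : ℝ → ℂ) : Prop :=
  ContDiff ℝ 2 f ∧ HasCompactSupport f ∧ tsupport f ⊆ Ioi (0 : ℝ)

/-- Left Haar measure `a⁻² db da` of the `ax+b` group, modelled on `ℝ × (0,∞)`
(first coordinate `b`, second coordinate `a`). -/
noncomputable def muG : Measure (ℝ × ℝ) :=
  (((volume : Measure ℝ).prod ((volume : Measure ℝ).restrict (Ioi (0 : ℝ)))).withDensity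
    fun p => ENNReal.ofReal ((p.2 ^ 2)⁻¹))

section OrthogonalityAux

open Complex FourierTransform Real
open scoped ComplexConjugate

/-! ### Generalities about `CcTwo` -/

lemma CcTwo.zero_of_nmem {f : ℝ → ℂ} (hf : CcTwo f) {t : ℝ} (ht : t ∉ Ioi (0:ℝ)) : f t = 0 := by
  by_contra h
  exact ht (hf.2.2 (subset_tsupport f (Function.mem_support.2 h)))

lemma cd_deriv {f : ℝ → ℂ} (hf : ContDiff ℝ 2 f) : ContDiff ℝ 1 (deriv f) := by
  have h2 : ContDiff ℝ ((1:WithTop ℕ∞)+1) f := by norm_num [hf]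
  exact (contDiff_succ_iff_deriv.1 h2).2.2

lemma contDiff_mul_ccTwo {f g : ℝ → ℂ} (hf : ContDiff ℝ 2 f) (hg : CcTwo g) :
    CcTwo fun t => f t * g t := by
  refine ⟨hf.mul hg.1, ?_, ?_⟩
  · exact (hg.2.1.mul_left (f := f))
  · exact (closure_mono (Function.support_mul_subset_right f g)).trans hg.2.2

lemma ccTwo_conj {f : ℝ → ℂ} (hf : CcTwo f) : CcTwo fun t => conj (f t) := by
  refine ⟨Complex.conjCLE.contDiff.comp hf.1, ?_, ?_⟩
  · exact hf.2.1.comp_left (map_zero _)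
  · refine (closure_mono ?_).trans hf.2.2
    intro t ht
    simp only [Function.mem_support] at ht ⊢
    exact fun h => ht (by simp [h])

lemma ccTwo_mul_inv {f : ℝ → ℂ} (hf : CcTwo f) : CcTwo fun t => f t * (t:ℂ)⁻¹ := by
  refine ⟨?_, ?_, ?_⟩
  · rw [contDiff_iff_contDiffAt]
    intro x
    by_cases hx : x ∈ tsupport f
    · have hx0 : (0:ℝ) < x := hf.2.2 hx
      have h1 : ContDiffAt ℝ 2 (fun t : ℝ => ((t:ℂ))⁻¹) x := by
        have := (contDiffAt_inv ℝ (x := (x:ℂ)) (by exact_mod_cast hx0.ne') (n := 2))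
        exact this.comp x Complex.ofRealCLM.contDiff.contDiffAt
      exact hf.1.contDiffAt.mul h1
    · have hev : (fun t : ℝ => f t * (t:ℂ)⁻¹) =ᶠ[nhds x] (fun _ => 0) := by
        filter_upwards [(isClosed_tsupport f).isOpen_compl.mem_nhds hx] with y hy
        simp [image_eq_zero_of_notMem_tsupport hy]
      exact (contDiffAt_const (c := (0:ℂ))).congr_of_eventuallyEq hev
  · refine hf.2.1.mono ?_
    intro t ht
    simp only [Function.mem_support] at ht ⊢
    exact fun h => ht (by simp [h])
  · refine (closure_mono ?_).trans hf.2.2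
    intro t ht
    simp only [Function.mem_support] at ht ⊢
    exact fun h => ht (by simp [h])

/-! ### Decay and integrability of Fourier transforms of `C²_c` functions -/

lemma norm_fourier_le {g : ℝ → ℂ} (hg : ContDiff ℝ 2 g) (hs : HasCompactSupport g) (b : ℝ) :
    ‖𝓕 g b‖ ≤ ((∫ t, ‖g t‖) + (∫ t, ‖deriv (deriv g) t‖) / (4*π^2)) * (1+b^2)⁻¹ := by
  have hgi : Integrable g := hg.continuous.integrable_of_hasCompactSupport hs
  have hd1c : Continuous (deriv g) := (cd_deriv hg).continuous
  have hd1i : Integrable (deriv g) := hd1c.integrable_of_hasCompactSupport hs.deriv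
  have hd2c : Continuous (deriv (deriv g)) := (cd_deriv hg).continuous_deriv le_rfl
  have hd2i : Integrable (deriv (deriv g)) := hd2c.integrable_of_hasCompactSupport hs.deriv.deriv
  have hdiff : Differentiable ℝ g := hg.differentiable two_ne_zero
  have hdiff1 : Differentiable ℝ (deriv g) := (cd_deriv hg).differentiable one_ne_zero
  have e1 : 𝓕 (deriv g) = fun x : ℝ => (2 * ↑π * I * ↑x) • 𝓕 g x :=
    Real.fourier_deriv hgi hdiff hd1i
  have e2 : 𝓕 (deriv (deriv g)) = fun x : ℝ => (2 * ↑π * I * ↑x) • 𝓕 (deriv g) x :=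
    Real.fourier_deriv hd1i hdiff1 hd2i
  have hb0 : ‖𝓕 g b‖ ≤ ∫ t, ‖g t‖ :=
    VectorFourier.norm_fourierIntegral_le_integral_norm _ _ _ _ _
  have hb2' : ‖𝓕 (deriv (deriv g)) b‖ ≤ ∫ t, ‖deriv (deriv g) t‖ :=
    VectorFourier.norm_fourierIntegral_le_integral_norm _ _ _ _ _
  have hnorm : ‖𝓕 (deriv (deriv g)) b‖ = (2*π*|b|)^2 * ‖𝓕 g b‖ := by
    rw [e2]; simp only [e1]
    rw [norm_smul, norm_smul, ← mul_assoc]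
    congr 1
    have : ‖(2 * ↑π * I * (b:ℂ))‖ = 2*π*|b| := by
      simp [norm_mul, abs_of_pos Real.pi_pos]
    rw [this]; ring
  have hb2 : b^2 * ‖𝓕 g b‖ ≤ (∫ t, ‖deriv (deriv g) t‖) / (4*π^2) := by
    rw [le_div_iff₀ (by positivity)]
    calc b^2 * ‖𝓕 g b‖ * (4*π^2) = (2*π*|b|)^2 * ‖𝓕 g b‖ := by
          rw [mul_pow, mul_pow, _root_.sq_abs]; ring
    _ ≤ _ := hnorm ▸ hb2'
  have h1 : (1+b^2) * ‖𝓕 g b‖ ≤ (∫ t, ‖g t‖) + (∫ t, ‖deriv (deriv g) t‖) / (4*π^2) := by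
    have : (1+b^2) * ‖𝓕 g b‖ = ‖𝓕 g b‖ + b^2 * ‖𝓕 g b‖ := by ring
    rw [this]; exact add_le_add hb0 hb2
  have hpos : (0:ℝ) < 1 + b^2 := by positivity
  calc ‖𝓕 g b‖ = (1+b^2) * ‖𝓕 g b‖ * (1+b^2)⁻¹ := by field_simp
  _ ≤ _ := by
      apply mul_le_mul_of_nonneg_right h1 (by positivity)

lemma continuous_fourier {g : ℝ → ℂ} (hgi : Integrable g) : Continuous (𝓕 g) :=
  VectorFourier.fourierIntegral_continuous Real.continuous_fourierChar continuous_inner hgi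

lemma integrable_fourier {g : ℝ → ℂ} (hg : ContDiff ℝ 2 g) (hs : HasCompactSupport g) :
    Integrable (𝓕 g) := by
  set M : ℝ := (∫ t, ‖g t‖) + (∫ t, ‖deriv (deriv g) t‖) / (4*π^2) with hM
  have hgi : Integrable g := hg.continuous.integrable_of_hasCompactSupport hs
  refine (integrable_inv_one_add_sq.const_mul M).mono'
    ((continuous_fourier hgi).aestronglyMeasurable) ?_
  filter_upwards with b
  simpa using norm_fourier_le hg hs b

/-! ### A Plancherel-type identity for `C²_c` functions -/

lemma innerl_flip : (innerₗ ℝ).flip = innerₗ ℝ := by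
  apply LinearMap.ext; intro x; apply LinearMap.ext; intro y
  simpa using real_inner_comm y x

lemma conj_ccTwo_aux {f : ℝ → ℂ} (hd : ContDiff ℝ 2 f) (hc : HasCompactSupport f) :
    ContDiff ℝ 2 (fun t => conj (f t)) ∧ HasCompactSupport (fun t => conj (f t)) :=
  ⟨Complex.conjCLE.contDiff.comp hd, hc.comp_left (map_zero _)⟩

lemma plancherel_cc {g₁ g₂ : ℝ → ℂ} (h₁ : ContDiff ℝ 2 g₁) (c₁ : HasCompactSupport g₁)
    (h₂ : ContDiff ℝ 2 g₂) (c₂ : HasCompactSupport g₂) :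
    ∫ b, 𝓕 g₁ b * conj (𝓕 g₂ b) = ∫ t, g₁ t * conj (g₂ t) := by
  set h : ℝ → ℂ := fun t => conj (g₂ t) with hh
  obtain ⟨hhd, hhc⟩ := conj_ccTwo_aux h₂ c₂
  have hg₁i : Integrable g₁ := h₁.continuous.integrable_of_hasCompactSupport c₁
  have hhi : Integrable h := hhd.continuous.integrable_of_hasCompactSupport hhc
  have hFh : Integrable (𝓕 h) := integrable_fourier hhd hhc
  have hinv_eq : 𝓕⁻ h = 𝓕 (fun x => h (-x)) :=
    Real.fourierInv_eq_fourier_comp_neg h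
  have hFinv : Integrable (𝓕⁻ h) := by
    rw [hinv_eq]
    refine integrable_fourier (hhd.comp (contDiff_neg)) ?_
    exact hhc.comp_homeomorph (Homeomorph.neg ℝ)
  have key : ∀ b, conj (𝓕 g₂ b) = 𝓕⁻ h b := by
    intro b
    rw [Real.fourier_eq', Real.fourierInv_eq', ← integral_conj]
    congr 1; funext t
    simp only [smul_eq_mul, map_mul, ← Complex.exp_conj, hh]
    congr 2
    simp only [map_mul, Complex.conj_ofReal, Complex.conj_I]
    push_cast
    ring
  have mult := VectorFourier.integral_fourierIntegral_smul_eq_flip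
    (e := Real.fourierChar) (L := innerₗ ℝ) (μ := (volume : Measure ℝ)) (ν := (volume : Measure ℝ))
    Real.continuous_fourierChar continuous_inner hg₁i hFinv
  rw [innerl_flip] at mult
  have hinv2 : 𝓕 (𝓕⁻ h) = h := hhd.continuous.fourier_fourierInv_eq hhi hFh
  calc ∫ b, 𝓕 g₁ b * conj (𝓕 g₂ b) = ∫ b, 𝓕 g₁ b • 𝓕⁻ h b := by
        simp only [key, smul_eq_mul]
  _ = ∫ x, g₁ x • 𝓕 (𝓕⁻ h) x := mult
  _ = ∫ t, g₁ t * conj (g₂ t) := by simp only [hinv2]; simp only [smul_eq_mul, hh]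

/-! ### `coeffP` as a Fourier transform -/

lemma norm_exp_I (r : ℝ) : ‖Complex.exp ((r:ℂ) * Complex.I)‖ = 1 := by
  simp [Complex.norm_exp]

lemma norm_exp_neg_I (r : ℝ) : ‖Complex.exp (-(r:ℂ) * Complex.I)‖ = 1 := by
  rw [show -(r:ℂ) = ((-r : ℝ) : ℂ) by push_cast; ring]
  exact norm_exp_I _

lemma coeffP_eq_fourier {ξ η : ℝ → ℂ} (hη : tsupport η ⊆ Ioi (0:ℝ)) (b a : ℝ) :
    coeffP ξ η b a = 𝓕 (fun t => ξ (a*t) * conj (η t) * (t:ℂ)⁻¹) b := by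
  rw [Real.fourier_eq', coeffP,
    ← setIntegral_eq_integral_of_forall_compl_eq_zero (s := Ioi (0:ℝ))
      (f := fun v : ℝ => Complex.exp ((↑(-2 * π * (inner ℝ v b : ℝ)) * Complex.I))
        • (ξ (a*v) * conj (η v) * (v:ℂ)⁻¹))]
  · apply setIntegral_congr_fun measurableSet_Ioi
    intro t _
    simp only [smul_eq_mul]
    have h2 : Complex.exp (↑(-2 * π * (inner ℝ t b:ℝ)) * Complex.I)
        = Complex.exp (-(2 * Real.pi * b * t : ℝ) * Complex.I) := by
      congr 1
      rw [show (inner ℝ t b : ℝ) = t * b from Real.inner_apply t b]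
      push_cast
      ring
    rw [h2]; ring
  · intro v hv
    have : η v = 0 := image_eq_zero_of_notMem_tsupport (fun h => hv (hη h))
    simp [this]

set_option maxHeartbeats 2000000 in
lemma continuous_coeffP {ξ η : ℝ → ℂ} (hξd : Continuous ξ) (hξc : HasCompactSupport ξ)
    (hηd : Continuous η)
    (hui : Integrable (fun t : ℝ => conj (η t) * (t:ℂ)⁻¹) (volume.restrict (Ioi 0))) :
    Continuous fun p : ℝ × ℝ => coeffP ξ η p.1 p.2 := by
  obtain ⟨Cξ, hCξ⟩ := hξc.exists_bound_of_continuous hξd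
  show Continuous fun p : ℝ × ℝ => ∫ t in Ioi (0:ℝ),
    Complex.exp (-(2 * Real.pi * p.1 * t : ℝ) * Complex.I) * ξ (p.2 * t)
      * starRingEnd ℂ (η t) * (t : ℂ)⁻¹
  apply continuous_of_dominated (bound := fun t => Cξ * ‖conj (η t) * (t:ℂ)⁻¹‖)
  · intro p
    apply ContinuousOn.aestronglyMeasurable ?_ measurableSet_Ioi
    have c1 : Continuous fun t : ℝ => (((2 * Real.pi * p.1 * t : ℝ)) : ℂ) :=
      Complex.continuous_ofReal.comp (continuous_const.mul continuous_id)
    have c2 : Continuous fun t : ℝ =>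
        Complex.exp (-(((2 * Real.pi * p.1 * t : ℝ)) : ℂ) * Complex.I) :=
      Complex.continuous_exp.comp (c1.neg.mul continuous_const)
    have c3 : Continuous fun t : ℝ => ξ (p.2 * t) := hξd.comp (continuous_const.mul continuous_id)
    have c4 : Continuous fun t : ℝ => starRingEnd ℂ (η t) := continuous_star.comp hηd
    have c5 : ContinuousOn (fun t : ℝ => ((t:ℂ))⁻¹) (Ioi 0) :=
      ContinuousOn.inv₀ Complex.continuous_ofReal.continuousOn
        (fun t ht => by exact_mod_cast (ne_of_gt (mem_Ioi.1 ht)))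
    exact (((c2.mul c3).mul c4).continuousOn).mul c5
  · intro p
    filter_upwards with t
    have heq : ‖Complex.exp (-(2 * Real.pi * p.1 * t : ℝ) * Complex.I) * ξ (p.2 * t)
        * starRingEnd ℂ (η t) * (t : ℂ)⁻¹‖
        = ‖Complex.exp (-(2 * Real.pi * p.1 * t : ℝ) * Complex.I)‖ * ‖ξ (p.2 * t)‖
          * ‖starRingEnd ℂ (η t) * (t:ℂ)⁻¹‖ := by
      rw [mul_assoc, norm_mul, norm_mul]
    rw [heq, norm_exp_neg_I, one_mul]
    exact mul_le_mul_of_nonneg_right (hCξ _) (norm_nonneg _)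
  · exact hui.norm.const_mul Cξ
  · filter_upwards with t
    have c1 : Continuous fun p : ℝ × ℝ => (((2 * Real.pi * p.1 * t : ℝ)) : ℂ) :=
      Complex.continuous_ofReal.comp ((continuous_const.mul continuous_fst).mul continuous_const)
    have c2 : Continuous fun p : ℝ × ℝ =>
        Complex.exp (-(((2 * Real.pi * p.1 * t : ℝ)) : ℂ) * Complex.I) :=
      Complex.continuous_exp.comp (c1.neg.mul continuous_const)
    have c3 : Continuous fun p : ℝ × ℝ => ξ (p.2 * t) :=
      hξd.comp (continuous_snd.mul continuous_const)
    exact ((c2.mul c3).mul continuous_const).mul continuous_const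

/-! ### Second derivative of dilated products and uniform Fourier bounds -/

lemma deriv2_dilmul {ξ u : ℝ → ℂ} (hξ : ContDiff ℝ 2 ξ) (hu : ContDiff ℝ 2 u) (a t : ℝ) :
    deriv (deriv (fun s => ξ (a*s) * u s)) t
      = ((a:ℂ) * (a:ℂ) * deriv (deriv ξ) (a*t)) * u t + ((a:ℂ) * deriv ξ (a*t)) * deriv u t
        + (((a:ℂ) * deriv ξ (a*t)) * deriv u t + ξ (a*t) * deriv (deriv u) t) := by
  have hξ1 : Differentiable ℝ ξ := hξ.differentiable two_ne_zero
  have hdξ : Differentiable ℝ (deriv ξ) := (cd_deriv hξ).differentiable one_ne_zero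
  have hu1 : Differentiable ℝ u := hu.differentiable two_ne_zero
  have hdu : Differentiable ℝ (deriv u) := (cd_deriv hu).differentiable one_ne_zero
  have hmul : ∀ s : ℝ, HasDerivAt (fun x : ℝ => a * x) a s := fun s => by
    simpa using (hasDerivAt_id s).const_mul a
  have h1 : ∀ s, HasDerivAt (fun x => ξ (a*x)) ((a:ℂ) * deriv ξ (a*s)) s := fun s => by
    have := HasDerivAt.scomp (𝕜 := ℝ) s ((hξ1 (a*s)).hasDerivAt) (hmul s)
    simpa [Complex.real_smul, Function.comp_def] using this
  have h2 : ∀ s, HasDerivAt (fun x => deriv ξ (a*x)) ((a:ℂ) * deriv (deriv ξ) (a*s)) s :=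
    fun s => by
    have := HasDerivAt.scomp (𝕜 := ℝ) s ((hdξ (a*s)).hasDerivAt) (hmul s)
    simpa [Complex.real_smul, Function.comp_def] using this
  have hg1 : deriv (fun s => ξ (a*s) * u s)
      = fun s => (a:ℂ) * deriv ξ (a*s) * u s + ξ (a*s) * deriv u s := by
    funext s
    exact ((h1 s).mul (hu1 s).hasDerivAt).deriv
  rw [hg1]
  have t1 : HasDerivAt (fun s => (a:ℂ) * deriv ξ (a*s) * u s)
      (((a:ℂ) * (a:ℂ) * deriv (deriv ξ) (a*t)) * u t + ((a:ℂ) * deriv ξ (a*t)) * deriv u t) t := by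
    have := (((h2 t).const_mul (a:ℂ)).mul (hu1 t).hasDerivAt)
    convert this using 1
    · rfl
    · rfl
    ring
  have t2 : HasDerivAt (fun s => ξ (a*s) * deriv u s)
      (((a:ℂ) * deriv ξ (a*t)) * deriv u t + ξ (a*t) * deriv (deriv u) t) t :=
    (h1 t).mul (hdu t).hasDerivAt
  exact (t1.add t2).deriv

lemma integral_norm_le_vol {h : ℝ → ℂ} (hh : Integrable h) {s : Set ℝ} (hs : IsCompact s)
    (hsupp : Function.support h ⊆ s) {C : ℝ} (hC : ∀ t, ‖h t‖ ≤ C) :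
    ∫ t, ‖h t‖ ≤ (volume s).toReal * C := by
  rw [← setIntegral_eq_integral_of_forall_compl_eq_zero (s := s)
    (f := fun t => ‖h t‖) (fun x hx => by
      simp [Function.notMem_support.1 (fun hm => hx (hsupp hm))])]
  calc ∫ t in s, ‖h t‖ ≤ ∫ _ in s, C := by
        apply setIntegral_mono_on hh.norm.integrableOn ?_ hs.measurableSet (fun t _ => hC t)
        exact integrableOn_const hs.measure_lt_top.ne
  _ = (volume s).toReal * C := by rw [setIntegral_const, smul_eq_mul]; rfl

lemma dilmul_contDiff {ξ u : ℝ → ℂ} (hξ : ContDiff ℝ 2 ξ) (hu : ContDiff ℝ 2 u) (a : ℝ) :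
    ContDiff ℝ 2 (fun s => ξ (a*s) * u s) :=
  (hξ.comp (contDiff_const.mul contDiff_id)).mul hu

lemma dilmul_support {ξ u : ℝ → ℂ} (a : ℝ) :
    Function.support (fun s => ξ (a*s) * u s) ⊆ tsupport u := fun t ht => by
  simp only [Function.mem_support] at ht
  apply subset_tsupport
  simp only [Function.mem_support]
  exact fun h => ht (by simp [h])

lemma dilmul_hcs {ξ u : ℝ → ℂ} (hu : HasCompactSupport u) (a : ℝ) :
    HasCompactSupport (fun s => ξ (a*s) * u s) :=
  hu.mono' (dilmul_support a)

lemma uniform_fourier_bound {ξ u : ℝ → ℂ} (hξd : ContDiff ℝ 2 ξ) (hξc : HasCompactSupport ξ)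
    (hud : ContDiff ℝ 2 u) (huc : HasCompactSupport u) (A : ℝ) :
    ∃ M : ℝ, 0 ≤ M ∧ (∀ a b : ℝ, ‖𝓕 (fun t => ξ (a*t) * u t) b‖ ≤ M)
      ∧ (∀ a b : ℝ, |a| ≤ A → ‖𝓕 (fun t => ξ (a*t) * u t) b‖ ≤ M * (1+b^2)⁻¹) := by
  obtain ⟨C0ξ, hC0ξ⟩ := hξc.exists_bound_of_continuous hξd.continuous
  obtain ⟨C1ξ, hC1ξ⟩ := hξc.deriv.exists_bound_of_continuous (cd_deriv hξd).continuous
  obtain ⟨C2ξ, hC2ξ⟩ := hξc.deriv.deriv.exists_bound_of_continuous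
    ((cd_deriv hξd).continuous_deriv le_rfl)
  obtain ⟨C0u, hC0u⟩ := huc.exists_bound_of_continuous hud.continuous
  obtain ⟨C1u, hC1u⟩ := huc.deriv.exists_bound_of_continuous (cd_deriv hud).continuous
  obtain ⟨C2u, hC2u⟩ := huc.deriv.deriv.exists_bound_of_continuous
    ((cd_deriv hud).continuous_deriv le_rfl)
  have h0ξ : 0 ≤ C0ξ := le_trans (norm_nonneg (ξ 0)) (hC0ξ 0)
  have h1ξ : 0 ≤ C1ξ := le_trans (norm_nonneg _) (hC1ξ 0)
  have h2ξ : 0 ≤ C2ξ := le_trans (norm_nonneg _) (hC2ξ 0)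
  have h0u : 0 ≤ C0u := le_trans (norm_nonneg (u 0)) (hC0u 0)
  have h1u : 0 ≤ C1u := le_trans (norm_nonneg _) (hC1u 0)
  have h2u : 0 ≤ C2u := le_trans (norm_nonneg _) (hC2u 0)
  set m : ℝ := (volume (tsupport u)).toReal with hm
  have hm0 : 0 ≤ m := ENNReal.toReal_nonneg
  set A' : ℝ := max A 0 with hA'
  set M : ℝ := m * (C0ξ * C0u)
      + m * (A'*A'*C2ξ*C0u + A'*C1ξ*C1u + (A'*C1ξ*C1u + C0ξ*C2u)) / (4*π^2) with hM
  have hMnn : 0 ≤ M := by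
    have : (0:ℝ) ≤ A' := le_max_right A 0
    positivity
  refine ⟨M, hMnn, ?_, ?_⟩
  · intro a b
    have hint : Integrable (fun t => ξ (a*t) * u t) :=
      (dilmul_contDiff hξd hud a).continuous.integrable_of_hasCompactSupport (dilmul_hcs huc a)
    have h1 : ‖𝓕 (fun t => ξ (a*t) * u t) b‖ ≤ ∫ t, ‖ξ (a*t) * u t‖ :=
      VectorFourier.norm_fourierIntegral_le_integral_norm _ _ _ _ _
    have h2 : ∫ t, ‖ξ (a*t) * u t‖ ≤ m * (C0ξ * C0u) := by
      apply integral_norm_le_vol hint huc (dilmul_support a)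
      intro t
      rw [norm_mul]
      exact mul_le_mul (hC0ξ _) (hC0u _) (norm_nonneg _) h0ξ
    calc ‖𝓕 (fun t => ξ (a*t) * u t) b‖ ≤ m * (C0ξ * C0u) := h1.trans h2
    _ ≤ M := by
        rw [hM]
        have : (0:ℝ) ≤ A' := le_max_right A 0
        have hnn : 0 ≤ m * (A'*A'*C2ξ*C0u + A'*C1ξ*C1u + (A'*C1ξ*C1u + C0ξ*C2u)) / (4*π^2) := by
          positivity
        linarith
  · intro a b hA
    have haA' : |a| ≤ A' := hA.trans (le_max_left A 0)
    set g : ℝ → ℂ := fun t => ξ (a*t) * u t with hg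
    have hgd : ContDiff ℝ 2 g := dilmul_contDiff hξd hud a
    have hgc : HasCompactSupport g := dilmul_hcs huc a
    have hgi : Integrable g := hgd.continuous.integrable_of_hasCompactSupport hgc
    have hg2i : Integrable (deriv (deriv g)) :=
      ((cd_deriv hgd).continuous_deriv le_rfl).integrable_of_hasCompactSupport hgc.deriv.deriv
    have key := norm_fourier_le hgd hgc b
    have hI0 : ∫ t, ‖g t‖ ≤ m * (C0ξ * C0u) := by
      apply integral_norm_le_vol hgi huc (dilmul_support a)
      intro t; rw [norm_mul]
      exact mul_le_mul (hC0ξ _) (hC0u _) (norm_nonneg _) h0ξ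
    have hsupp2 : Function.support (deriv (deriv g)) ⊆ tsupport u := by
      have s1 : tsupport (deriv g) ⊆ tsupport g :=
        closure_minimal (support_deriv_subset) (isClosed_tsupport g)
      have s2 : Function.support (deriv (deriv g)) ⊆ tsupport (deriv g) := support_deriv_subset
      have s3 : tsupport g ⊆ tsupport u :=
        closure_minimal (dilmul_support a) (isClosed_tsupport u)
      exact s2.trans (s1.trans s3)
    have hI2 : ∫ t, ‖deriv (deriv g) t‖
        ≤ m * (A'*A'*C2ξ*C0u + A'*C1ξ*C1u + (A'*C1ξ*C1u + C0ξ*C2u)) := by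
      apply integral_norm_le_vol hg2i huc hsupp2
      intro t
      rw [hg, deriv2_dilmul hξd hud a t]
      have e1 : ‖((a:ℂ) * (a:ℂ) * deriv (deriv ξ) (a*t)) * u t‖ ≤ A'*A'*C2ξ*C0u := by
        rw [norm_mul, norm_mul, norm_mul]
        simp only [Complex.norm_real, Real.norm_eq_abs]
        apply mul_le_mul ?_ (hC0u _) (norm_nonneg _) (by positivity)
        apply mul_le_mul ?_ (hC2ξ _) (norm_nonneg _) (by positivity)
        exact mul_le_mul haA' haA' (abs_nonneg a) (le_trans (abs_nonneg a) haA')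
      have e2 : ‖((a:ℂ) * deriv ξ (a*t)) * deriv u t‖ ≤ A'*C1ξ*C1u := by
        rw [norm_mul, norm_mul]
        simp only [Complex.norm_real, Real.norm_eq_abs]
        apply mul_le_mul ?_ (hC1u _) (norm_nonneg _) (by positivity)
        exact mul_le_mul haA' (hC1ξ _) (norm_nonneg _) (le_trans (abs_nonneg a) haA')
      have e3 : ‖ξ (a*t) * deriv (deriv u) t‖ ≤ C0ξ*C2u := by
        rw [norm_mul]
        exact mul_le_mul (hC0ξ _) (hC2u _) (norm_nonneg _) h0ξ
      calc ‖_ + _ + (_ + _)‖ ≤ _ := norm_add_le _ _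
      _ ≤ (A'*A'*C2ξ*C0u + A'*C1ξ*C1u) + (A'*C1ξ*C1u + C0ξ*C2u) := by
          apply add_le_add
          · exact (norm_add_le _ _).trans (add_le_add e1 e2)
          · exact (norm_add_le _ _).trans (add_le_add e2 e3)
      _ = A'*A'*C2ξ*C0u + A'*C1ξ*C1u + (A'*C1ξ*C1u + C0ξ*C2u) := by ring
    calc ‖𝓕 g b‖ ≤ ((∫ t, ‖g t‖) + (∫ t, ‖deriv (deriv g) t‖) / (4*π^2)) * (1+b^2)⁻¹ := key
    _ ≤ M * (1+b^2)⁻¹ := by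
        apply mul_le_mul_of_nonneg_right ?_ (by positivity)
        rw [hM]
        apply add_le_add hI0
        gcongr

/-! ### Compactness and lower bounds for quotient sets -/

lemma compact_quot {S T : Set ℝ} (hS : IsCompact S) (hT : IsCompact T) (hTpos : T ⊆ Ioi 0) :
    IsCompact ((fun p : ℝ × ℝ => p.1 / p.2) '' (S ×ˢ T)) := by
  apply (hS.prod hT).image_of_continuousOn
  apply ContinuousOn.div continuousOn_fst continuousOn_snd
  exact fun p hp => ne_of_gt (hTpos hp.2)

lemma quot_pos {S T : Set ℝ} (hSpos : S ⊆ Ioi 0) (hTpos : T ⊆ Ioi 0) :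
    ((fun p : ℝ × ℝ => p.1 / p.2) '' (S ×ˢ T)) ⊆ Ioi 0 := by
  rintro x ⟨⟨s, t⟩, ⟨hs, ht⟩, rfl⟩
  exact div_pos (hSpos hs) (show (0:ℝ) < t from hTpos ht)

lemma exists_lb {K : Set ℝ} (hK : IsCompact K) (hKpos : K ⊆ Ioi 0) :
    ∃ δ : ℝ, 0 < δ ∧ ∀ x ∈ K, δ ≤ x := by
  rcases K.eq_empty_or_nonempty with h | h
  · exact ⟨1, one_pos, by simp [h]⟩
  · exact ⟨sInf K, hKpos (hK.sInf_mem h), fun x hx => csInf_le hK.bddBelow hx⟩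

lemma mem_quot {S T : Set ℝ} (hTpos : T ⊆ Ioi 0) {a t : ℝ} (h1 : a * t ∈ S) (h2 : t ∈ T) :
    a ∈ (fun p : ℝ × ℝ => p.1 / p.2) '' (S ×ˢ T) := by
  refine ⟨(a*t, t), ⟨h1, h2⟩, ?_⟩
  have : t ≠ 0 := ne_of_gt (hTpos h2)
  field_simp

lemma integrable_indicator_restrict {K : Set ℝ} (hK : IsCompact K) (c : ℝ) (s : Set ℝ) :
    Integrable (K.indicator fun _ => c) (volume.restrict s) := by
  rw [integrable_indicator_iff hK.measurableSet]
  refine integrableOn_const (ne_of_lt ?_)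
  calc (volume.restrict s) K ≤ volume K := Measure.restrict_apply_le s K
  _ < ⊤ := hK.measure_lt_top

/-! ### The final Fubini/scaling computation -/

lemma final_integral {ξ₁ ξ₂ w : ℝ → ℂ}
    (hξ₁d : Continuous ξ₁) (hξ₁c : HasCompactSupport ξ₁) (hξ₁s : tsupport ξ₁ ⊆ Ioi 0)
    (hξ₂d : Continuous ξ₂) (hξ₂c : HasCompactSupport ξ₂)
    (hwd : Continuous w) (hwc : HasCompactSupport w) (hws : tsupport w ⊆ Ioi 0) :
    ∫ a in Ioi (0:ℝ), ((a^2)⁻¹ : ℝ) • (∫ t in Ioi (0:ℝ), ξ₁ (a*t) * conj (ξ₂ (a*t)) * w t)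
      = (∫ t in Ioi (0:ℝ), w t * (t:ℂ)) * (∫ s in Ioi (0:ℝ), ξ₁ s * conj (ξ₂ s) * ((s:ℂ)^2)⁻¹) := by
  set ν := volume.restrict (Ioi (0:ℝ)) with hν
  set K := (fun p : ℝ × ℝ => p.1 / p.2) '' (tsupport ξ₁ ×ˢ tsupport w) with hK
  have hKc : IsCompact K := compact_quot hξ₁c hwc hws
  have hKpos : K ⊆ Ioi 0 := quot_pos hξ₁s hws
  obtain ⟨δ, hδ0, hδ⟩ := exists_lb hKc hKpos
  obtain ⟨C1, hC1⟩ := hξ₁c.exists_bound_of_continuous hξ₁d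
  obtain ⟨C2, hC2⟩ := hξ₂c.exists_bound_of_continuous hξ₂d
  obtain ⟨Cw, hCw⟩ := hwc.exists_bound_of_continuous hwd
  set F : ℝ × ℝ → ℂ := fun p =>
    ((p.1^2)⁻¹ : ℝ) • (ξ₁ (p.1*p.2) * conj (ξ₂ (p.1*p.2)) * w p.2) with hF
  set c : ℝ := δ⁻¹ * δ⁻¹ * (C1 * (C2 * Cw)) with hc
  have hc0 : 0 ≤ c := by
    have h1 : 0 ≤ C1 := le_trans (norm_nonneg (ξ₁ 0)) (hC1 0)
    have h2 : 0 ≤ C2 := le_trans (norm_nonneg (ξ₂ 0)) (hC2 0)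
    have h3 : 0 ≤ Cw := le_trans (norm_nonneg (w 0)) (hCw 0)
    positivity
  set bound : ℝ × ℝ → ℝ := fun p =>
    (K.indicator (fun _ => c) p.1) * ((tsupport w).indicator (fun _ => (1:ℝ)) p.2) with hbd
  have hFb : ∀ p : ℝ × ℝ, ‖F p‖ ≤ bound p := by
    intro ⟨a, t⟩
    by_cases h0 : F (a, t) = 0
    · rw [h0, norm_zero, hbd]
      apply mul_nonneg <;>
        · apply indicator_nonneg; intro x _
          first | exact hc0 | norm_num
    · have hsup : a * t ∈ tsupport ξ₁ ∧ t ∈ tsupport w := by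
        constructor
        · apply subset_tsupport
          intro hz
          exact h0 (by simp [hF, hz])
        · apply subset_tsupport
          intro hz
          exact h0 (by simp [hF, hz])
      have haK : a ∈ K := mem_quot hws hsup.1 hsup.2
      have haδ : δ ≤ a := hδ a haK
      have hbound_eq : bound (a, t) = c := by
        rw [hbd]; simp [indicator_of_mem haK, indicator_of_mem hsup.2]
      rw [hbound_eq, hF]
      simp only [norm_smul, Real.norm_eq_abs]
      have h1 : |(a^2)⁻¹| ≤ δ⁻¹ * δ⁻¹ := by
        rw [_root_.abs_of_nonneg (by positivity : (0:ℝ) ≤ (a^2)⁻¹), sq, mul_inv]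
        have hinv : a⁻¹ ≤ δ⁻¹ := inv_anti₀ hδ0 haδ
        have ha0 : (0:ℝ) < a := lt_of_lt_of_le hδ0 haδ
        exact mul_le_mul hinv hinv (by positivity) (by positivity)
      have h2 : ‖ξ₁ (a*t) * conj (ξ₂ (a*t)) * w t‖ ≤ C1 * (C2 * Cw) := by
        rw [norm_mul, norm_mul, mul_assoc]
        apply mul_le_mul (hC1 _) ?_ (by positivity) (le_trans (norm_nonneg (ξ₁ 0)) (hC1 0))
        rw [RCLike.norm_conj]
        exact mul_le_mul (hC2 _) (hCw _) (norm_nonneg _) (le_trans (norm_nonneg (ξ₂ 0)) (hC2 0))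
      rw [hc]
      exact mul_le_mul h1 h2 (by positivity) (by positivity)
  have hbi : Integrable bound (ν.prod ν) :=
    (integrable_indicator_restrict hKc c _).mul_prod (integrable_indicator_restrict hwc 1 _)
  have hFm : AEStronglyMeasurable F (ν.prod ν) := by
    have m1 : Measurable fun p : ℝ × ℝ => ((p.1^2)⁻¹ : ℝ) := ((measurable_fst.pow_const 2).inv)
    have c2 : Continuous fun p : ℝ × ℝ => ξ₁ (p.1*p.2) * conj (ξ₂ (p.1*p.2)) * w p.2 :=
      ((hξ₁d.comp (continuous_fst.mul continuous_snd)).mul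
        ((continuous_star.comp hξ₂d).comp (continuous_fst.mul continuous_snd))).mul
        (hwd.comp continuous_snd)
    exact m1.aestronglyMeasurable.smul c2.aestronglyMeasurable
  have hFi : Integrable F (ν.prod ν) := hbi.mono' hFm (Filter.Eventually.of_forall hFb)
  have step1 : ∫ a in Ioi (0:ℝ), ((a^2)⁻¹ : ℝ) • (∫ t in Ioi (0:ℝ), ξ₁ (a*t) * conj (ξ₂ (a*t)) * w t)
      = ∫ p, F p ∂(ν.prod ν) := by
    rw [MeasureTheory.integral_prod F hFi]
    apply setIntegral_congr_fun measurableSet_Ioi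
    intro a _
    show ((a^2)⁻¹ : ℝ) • (∫ t in Ioi (0:ℝ), ξ₁ (a*t) * conj (ξ₂ (a*t)) * w t) = ∫ y, F (a, y) ∂ν
    rw [← integral_smul]
  rw [step1, MeasureTheory.integral_prod_symm F hFi]
  have step2 : ∀ t ∈ Ioi (0:ℝ), (∫ a, F (a, t) ∂ν)
      = (w t * (t:ℂ)) * (∫ s in Ioi (0:ℝ), ξ₁ s * conj (ξ₂ s) * ((s:ℂ)^2)⁻¹) := by
    intro t ht
    have ht0 : (0:ℝ) < t := ht
    have htC : (t:ℂ) ≠ 0 := by exact_mod_cast ht0.ne'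
    have : (∫ a, F (a, t) ∂ν)
        = ∫ a in Ioi (0:ℝ), (w t * (t:ℂ)^2)
            • ((fun s : ℝ => ξ₁ s * conj (ξ₂ s) * ((s:ℂ)^2)⁻¹) (t*a)) := by
      show (∫ a in Ioi (0:ℝ), F (a, t)) = _
      apply setIntegral_congr_fun measurableSet_Ioi
      intro a ha
      have ha0 : (0:ℝ) < a := ha
      have haC : (a:ℂ) ≠ 0 := by exact_mod_cast ha0.ne'
      show ((a^2)⁻¹ : ℝ) • (ξ₁ (a*t) * conj (ξ₂ (a*t)) * w t) = _
      simp only [Complex.real_smul, smul_eq_mul]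
      rw [mul_comm a t]
      push_cast
      field_simp
    rw [this, integral_smul, MeasureTheory.integral_comp_mul_left_Ioi
      (fun s : ℝ => ξ₁ s * conj (ξ₂ s) * ((s:ℂ)^2)⁻¹) 0 ht0, mul_zero]
    rw [smul_eq_mul, Complex.real_smul]
    push_cast
    field_simp
  rw [setIntegral_congr_fun measurableSet_Ioi step2]
  exact integral_mul_const _ _

end OrthogonalityAux
section MainThm
open MeasureTheory Set Complex FourierTransform Real
open scoped ComplexConjugate NNReal ENNReal

set_option maxHeartbeats 2000000 in
/-- **Orthogonality relations for `π₊`** (Proposition 4.5(a) of Choi–Ghandehari):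
for `ξᵢ, ηᵢ ∈ C_c²((0,∞))`,
`⟨ξ₁ *₊ η₁, ξ₂ *₊ η₂⟩_{L²(G)} = ⟨η₂, η₁⟩_ℋ ⟨K^{-1/2}ξ₁, K^{-1/2}ξ₂⟩_ℋ`. -/
theorem orthogonality_plus_plus (ξ₁ η₁ ξ₂ η₂ : ℝ → ℂ)
    (hξ₁ : CcTwo ξ₁) (hη₁ : CcTwo η₁) (hξ₂ : CcTwo ξ₂) (hη₂ : CcTwo η₂) :
    Integrable (fun p : ℝ × ℝ =>
      coeffP ξ₁ η₁ p.1 p.2 * starRingEnd ℂ (coeffP ξ₂ η₂ p.1 p.2)) muG ∧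
    ∫ p, coeffP ξ₁ η₁ p.1 p.2 * starRingEnd ℂ (coeffP ξ₂ η₂ p.1 p.2) ∂muG
      = (∫ t in Ioi (0 : ℝ), η₂ t * starRingEnd ℂ (η₁ t) * (t : ℂ)⁻¹) *
        (∫ t in Ioi (0 : ℝ), ξ₁ t * starRingEnd ℂ (ξ₂ t) * ((t : ℂ) ^ 2)⁻¹) := by
  obtain ⟨hξ₁d, hξ₁c, hξ₁s⟩ := hξ₁
  obtain ⟨hξ₂d, hξ₂c, hξ₂s⟩ := hξ₂
  set u₁ : ℝ → ℂ := fun t => conj (η₁ t) * (t:ℂ)⁻¹ with hu₁def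
  set u₂ : ℝ → ℂ := fun t => conj (η₂ t) * (t:ℂ)⁻¹ with hu₂def
  have hu₁ : CcTwo u₁ := ccTwo_mul_inv (ccTwo_conj hη₁)
  have hu₂ : CcTwo u₂ := ccTwo_mul_inv (ccTwo_conj hη₂)
  -- `coeffP` as a Fourier transform
  have hco₁ : ∀ b a : ℝ, coeffP ξ₁ η₁ b a = 𝓕 (fun t => ξ₁ (a*t) * u₁ t) b := by
    intro b a
    rw [coeffP_eq_fourier hη₁.2.2 b a]
    refine congrArg (fun (f : ℝ → ℂ) => 𝓕 f b) ?_
    funext t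
    show ξ₁ (a*t) * conj (η₁ t) * (t:ℂ)⁻¹ = ξ₁ (a*t) * (conj (η₁ t) * (t:ℂ)⁻¹)
    rw [mul_assoc]
  have hco₂ : ∀ b a : ℝ, coeffP ξ₂ η₂ b a = 𝓕 (fun t => ξ₂ (a*t) * u₂ t) b := by
    intro b a
    rw [coeffP_eq_fourier hη₂.2.2 b a]
    refine congrArg (fun (f : ℝ → ℂ) => 𝓕 f b) ?_
    funext t
    show ξ₂ (a*t) * conj (η₂ t) * (t:ℂ)⁻¹ = ξ₂ (a*t) * (conj (η₂ t) * (t:ℂ)⁻¹)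
    rw [mul_assoc]
  -- support in the `a` variable, and uniform bounds
  set K := (fun p : ℝ × ℝ => p.1 / p.2) '' (tsupport ξ₁ ×ˢ tsupport u₁) with hKdef
  have hKc : IsCompact K := compact_quot hξ₁c hu₁.2.1 hu₁.2.2
  have hKpos : K ⊆ Ioi 0 := quot_pos hξ₁s hu₁.2.2
  obtain ⟨δ, hδ0, hδ⟩ := exists_lb hKc hKpos
  obtain ⟨A, hA⟩ : ∃ A : ℝ, ∀ x ∈ K, |x| ≤ A := by
    obtain ⟨r, hr⟩ := hKc.isBounded.subset_closedBall 0
    exact ⟨r, fun x hx => by simpa [Real.dist_eq] using hr hx⟩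
  obtain ⟨M₁, hM₁0, hM₁sup, hM₁dec⟩ := uniform_fourier_bound hξ₁d hξ₁c hu₁.1 hu₁.2.1 A
  obtain ⟨M₂, hM₂0, hM₂sup, -⟩ := uniform_fourier_bound hξ₂d hξ₂c hu₂.1 hu₂.2.1 0
  have hvan : ∀ a : ℝ, a ∉ K → (fun t => ξ₁ (a*t) * u₁ t) = (fun _ => (0:ℂ)) := by
    intro a ha
    funext t
    by_contra h
    have h1 : a * t ∈ tsupport ξ₁ := subset_tsupport _ (fun hz => h (by simp [hz]))
    have h2 : t ∈ tsupport u₁ := subset_tsupport _ (fun hz => h (by simp [hz]))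
    exact ha (mem_quot hu₁.2.2 h1 h2)
  have hFzero : 𝓕 (fun _ : ℝ => (0:ℂ)) = fun _ => 0 := by
    funext b
    rw [Real.fourier_eq]
    simp
  -- the integrand with density
  set ν := volume.restrict (Ioi (0:ℝ)) with hν
  set Φ : ℝ × ℝ → ℂ := fun p =>
    coeffP ξ₁ η₁ p.1 p.2 * starRingEnd ℂ (coeffP ξ₂ η₂ p.1 p.2) with hΦ
  set Ψ : ℝ × ℝ → ℂ := fun p => ((p.2^2)⁻¹ : ℝ) • Φ p with hΨ
  set c : ℝ := δ⁻¹ * δ⁻¹ * (M₁ * M₂) with hc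
  have hc0 : 0 ≤ c := by positivity
  set bound : ℝ × ℝ → ℝ := fun p => (1+p.1^2)⁻¹ * K.indicator (fun _ => c) p.2 with hbd
  have hΨb : ∀ p : ℝ × ℝ, ‖Ψ p‖ ≤ bound p := by
    rintro ⟨b, a⟩
    by_cases haK : a ∈ K
    · have haδ : δ ≤ a := hδ a haK
      have ha0 : (0:ℝ) < a := lt_of_lt_of_le hδ0 haδ
      have hbound_eq : bound (b, a) = (1+b^2)⁻¹ * c := by
        rw [hbd]; simp [indicator_of_mem haK]
      rw [hbound_eq, hΨ]
      simp only [norm_smul, Real.norm_eq_abs]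
      have h1 : |(a^2)⁻¹| ≤ δ⁻¹ * δ⁻¹ := by
        rw [_root_.abs_of_nonneg (by positivity : (0:ℝ) ≤ (a^2)⁻¹), sq, mul_inv]
        have hinv : a⁻¹ ≤ δ⁻¹ := inv_anti₀ hδ0 haδ
        exact mul_le_mul hinv hinv (by positivity) (by positivity)
      have h2 : ‖Φ (b, a)‖ ≤ M₁ * (1+b^2)⁻¹ * M₂ := by
        rw [hΦ]
        show ‖coeffP ξ₁ η₁ b a * starRingEnd ℂ (coeffP ξ₂ η₂ b a)‖ ≤ _
        rw [norm_mul, RCLike.norm_conj]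
        apply mul_le_mul ?_ ?_ (norm_nonneg _) (by positivity)
        · rw [hco₁]; exact hM₁dec a b (hA a haK)
        · rw [hco₂]; exact hM₂sup a b
      calc |(a^2)⁻¹| * ‖Φ (b,a)‖ ≤ (δ⁻¹*δ⁻¹) * (M₁ * (1+b^2)⁻¹ * M₂) :=
            mul_le_mul h1 h2 (norm_nonneg _) (by positivity)
      _ = (1+b^2)⁻¹ * c := by rw [hc]; ring
    · have hz : coeffP ξ₁ η₁ b a = 0 := by rw [hco₁, hvan a haK, hFzero]
      have : Ψ (b, a) = 0 := by
        rw [hΨ]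
        show ((a^2)⁻¹ : ℝ) • Φ (b, a) = 0
        rw [hΦ]
        show ((a^2)⁻¹ : ℝ) • (coeffP ξ₁ η₁ b a * starRingEnd ℂ (coeffP ξ₂ η₂ b a)) = 0
        rw [hz, zero_mul, smul_zero]
      rw [this, norm_zero, hbd]
      exact mul_nonneg (by positivity) (indicator_nonneg (fun _ _ => hc0) _)
  have hbi : Integrable bound ((volume : Measure ℝ).prod ν) :=
    integrable_inv_one_add_sq.mul_prod (integrable_indicator_restrict hKc c _)
  have hu₁i : Integrable (fun t : ℝ => conj (η₁ t) * (t:ℂ)⁻¹) (volume.restrict (Ioi 0)) :=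
    (hu₁.1.continuous.integrable_of_hasCompactSupport hu₁.2.1).restrict
  have hu₂i : Integrable (fun t : ℝ => conj (η₂ t) * (t:ℂ)⁻¹) (volume.restrict (Ioi 0)) :=
    (hu₂.1.continuous.integrable_of_hasCompactSupport hu₂.2.1).restrict
  have hcont₁ : Continuous fun p : ℝ × ℝ => coeffP ξ₁ η₁ p.1 p.2 :=
    continuous_coeffP hξ₁d.continuous hξ₁c hη₁.1.continuous hu₁i
  have hcont₂ : Continuous fun p : ℝ × ℝ => coeffP ξ₂ η₂ p.1 p.2 :=
    continuous_coeffP hξ₂d.continuous hξ₂c hη₂.1.continuous hu₂i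
  have hΨm : AEStronglyMeasurable Ψ ((volume : Measure ℝ).prod ν) := by
    have m1 : Measurable fun p : ℝ × ℝ => ((p.2^2)⁻¹ : ℝ) := (measurable_snd.pow_const 2).inv
    exact m1.aestronglyMeasurable.smul
      (hcont₁.mul (continuous_star.comp hcont₂)).aestronglyMeasurable
  have hΨi : Integrable Ψ ((volume : Measure ℝ).prod ν) :=
    hbi.mono' hΨm (Filter.Eventually.of_forall hΨb)
  have hdens : Measurable fun p : ℝ × ℝ => ((p.2^2)⁻¹ : ℝ).toNNReal :=
    ((measurable_snd.pow_const 2).inv).real_toNNReal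
  have hmuG : muG = ((volume : Measure ℝ).prod ν).withDensity
      (fun p => ((((p.2^2)⁻¹ : ℝ).toNNReal : ℝ≥0) : ℝ≥0∞)) := rfl
  have hsmul_eq : (fun p : ℝ × ℝ => (((p.2^2)⁻¹ : ℝ).toNNReal) • Φ p) = Ψ := by
    funext p
    rw [hΨ]
    show (((p.2^2)⁻¹ : ℝ).toNNReal) • Φ p = ((p.2^2)⁻¹ : ℝ) • Φ p
    rw [NNReal.smul_def, Real.coe_toNNReal _ (by positivity)]
  constructor
  · rw [hmuG, integrable_withDensity_iff_integrable_smul hdens]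
    show Integrable (fun p : ℝ × ℝ => (((p.2^2)⁻¹ : ℝ).toNNReal) • Φ p) _
    rwa [hsmul_eq]
  -- the value computation
  set w : ℝ → ℂ := fun t => η₂ t * conj (η₁ t) * ((t:ℂ)^2)⁻¹ with hwdef
  have hwcc : CcTwo w := by
    have h1 : CcTwo fun t => (η₂ t * conj (η₁ t) * (t:ℂ)⁻¹) * (t:ℂ)⁻¹ :=
      ccTwo_mul_inv (ccTwo_mul_inv (contDiff_mul_ccTwo hη₂.1 (ccTwo_conj hη₁)))
    have heq : (fun t => (η₂ t * conj (η₁ t) * (t:ℂ)⁻¹) * (t:ℂ)⁻¹) = w := by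
      funext t
      rw [hwdef]
      show (η₂ t * conj (η₁ t) * (t:ℂ)⁻¹) * (t:ℂ)⁻¹ = η₂ t * conj (η₁ t) * ((t:ℂ)^2)⁻¹
      rw [sq, mul_inv]; ring
    rwa [heq] at h1
  have hstep : ∀ a ∈ Ioi (0:ℝ), (∫ b : ℝ, Ψ (b, a))
      = ((a^2)⁻¹ : ℝ) • (∫ t in Ioi (0:ℝ), ξ₁ (a*t) * conj (ξ₂ (a*t)) * w t) := by
    intro a _
    have e0 : (∫ b : ℝ, Ψ (b, a)) = ((a^2)⁻¹ : ℝ) • ∫ b : ℝ, Φ (b, a) := by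
      show (∫ b : ℝ, ((a^2)⁻¹ : ℝ) • Φ (b, a)) = _
      rw [integral_smul]
    rw [e0]
    congr 1
    have ep : ∀ b : ℝ, Φ (b, a) = 𝓕 (fun t => ξ₁ (a*t) * u₁ t) b
        * conj (𝓕 (fun t => ξ₂ (a*t) * u₂ t) b) := by
      intro b
      show coeffP ξ₁ η₁ b a * starRingEnd ℂ (coeffP ξ₂ η₂ b a) = _
      rw [hco₁, hco₂]
    calc (∫ b : ℝ, Φ (b, a))
        = ∫ b : ℝ, 𝓕 (fun t => ξ₁ (a*t) * u₁ t) b * conj (𝓕 (fun t => ξ₂ (a*t) * u₂ t) b) := by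
          simp only [ep]
    _ = ∫ t : ℝ, (ξ₁ (a*t) * u₁ t) * conj (ξ₂ (a*t) * u₂ t) :=
        plancherel_cc (dilmul_contDiff hξ₁d hu₁.1 a) (dilmul_hcs hu₁.2.1 a)
          (dilmul_contDiff hξ₂d hu₂.1 a) (dilmul_hcs hu₂.2.1 a)
    _ = ∫ t in Ioi (0:ℝ), ξ₁ (a*t) * conj (ξ₂ (a*t)) * w t := by
        rw [← setIntegral_eq_integral_of_forall_compl_eq_zero (s := Ioi (0:ℝ))
          (f := fun t : ℝ => (ξ₁ (a*t) * u₁ t) * conj (ξ₂ (a*t) * u₂ t))]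
        · apply setIntegral_congr_fun measurableSet_Ioi
          intro t ht
          have htC : (t:ℂ) ≠ 0 := by exact_mod_cast (ne_of_gt (mem_Ioi.1 ht))
          show (ξ₁ (a*t) * (conj (η₁ t) * (t:ℂ)⁻¹))
              * conj (ξ₂ (a*t) * (conj (η₂ t) * (t:ℂ)⁻¹))
              = ξ₁ (a*t) * conj (ξ₂ (a*t)) * (η₂ t * conj (η₁ t) * ((t:ℂ)^2)⁻¹)
          simp only [map_mul, map_inv₀, Complex.conj_conj, Complex.conj_ofReal]
          ring
        · intro t ht
          have h0 : η₁ t = 0 := hη₁.zero_of_nmem ht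
          show (ξ₁ (a*t) * (conj (η₁ t) * (t:ℂ)⁻¹)) * conj (ξ₂ (a*t) * (conj (η₂ t) * (t:ℂ)⁻¹)) = 0
          rw [h0]
          simp
  rw [hmuG, integral_withDensity_eq_integral_smul hdens]
  show (∫ p : ℝ × ℝ, (((p.2^2)⁻¹ : ℝ).toNNReal) • Φ p ∂((volume : Measure ℝ).prod ν)) = _
  rw [hsmul_eq, MeasureTheory.integral_prod_symm Ψ hΨi]
  show (∫ a in Ioi (0:ℝ), ∫ b : ℝ, Ψ (b, a)) = _
  rw [setIntegral_congr_fun measurableSet_Ioi hstep]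
  rw [final_integral hξ₁d.continuous hξ₁c hξ₁s hξ₂d.continuous hξ₂c hwcc.1.continuous hwcc.2.1 hwcc.2.2]
  congr 1
  apply setIntegral_congr_fun measurableSet_Ioi
  intro t ht
  have htC : (t:ℂ) ≠ 0 := by exact_mod_cast (ne_of_gt (mem_Ioi.1 ht))
  show (η₂ t * conj (η₁ t) * ((t:ℂ)^2)⁻¹) * (t:ℂ) = η₂ t * conj (η₁ t) * (t:ℂ)⁻¹
  field_simp

end MainThm
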